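/- Let c > 0 and r ≥ 1 be real numbers, let r* be a real number with 1 ≤ r* ≤ r, and set K* = max{(r*/r)^{1/r}·c, (1+log 2)^{1/r}·c}. Then for every t ≥ 0, min(1, 2·exp(1 − (t/c)^r)) ≤ exp(1 − (t/K*)^{r*}). (Deterministic tail-comparison step in the proof of Lemma 2.) -/

import Mathlib

/-- Deterministic tail-comparison step in the proof of Lemma 2: for `c > 0`,
`r ≥ 1`, `1 ≤ r* ≤ r` and `K* = max ((r*/r)^(1/r) * c) ((1 + log 2)^(1/r) * c)`,
one has `min 1 (2 * exp (1 - (t/c)^r)) ≤ exp (1 - (t/K*)^{r*})` for all `t ≥ 0`. -/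
theorem min_tail_le_exp_tail
    (c r : ℝ) (hc : 0 < c) (hr : 1 ≤ r)
    (rstar : ℝ) (h1 : 1 ≤ rstar) (h2 : rstar ≤ r)
    (Kstar : ℝ)
    (hKstar : Kstar = max ((rstar / r) ^ (1 / r) * c) ((1 + Real.log 2) ^ (1 / r) * c)) :
    ∀ t : ℝ, 0 ≤ t →
      min 1 (2 * Real.exp (1 - (t / c) ^ r)) ≤ Real.exp (1 - (t / Kstar) ^ rstar) := by
  have hrpos : (0 : ℝ) < r := lt_of_lt_of_le one_pos hr
  have hlog2 : (0 : ℝ) ≤ Real.log 2 := Real.log_nonneg (by norm_num)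
  have hK : Kstar = (1 + Real.log 2) ^ (1 / r) * c := by
    rw [hKstar, max_eq_right]
    apply mul_le_mul_of_nonneg_right _ hc.le
    apply Real.rpow_le_rpow (by positivity) _ (by positivity)
    have : rstar / r ≤ 1 := div_le_one_of_le₀ h2 hrpos.le
    linarith
  have hbase : (1 : ℝ) ≤ 1 + Real.log 2 := by linarith
  have hKc : 1 ≤ Kstar / c := by
    rw [hK, mul_div_assoc, div_self hc.ne', mul_one]
    exact Real.one_le_rpow hbase (by positivity)
  have hKpos : 0 < Kstar := lt_of_lt_of_le hc (by
    have := (one_le_div hc).mp hKc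
    linarith)
  have hKr : (Kstar / c) ^ r = 1 + Real.log 2 := by
    rw [hK, mul_div_assoc, div_self hc.ne', mul_one,
      ← Real.rpow_mul (by positivity)]
    · rw [one_div, inv_mul_cancel₀ hrpos.ne', Real.rpow_one]
  intro t ht
  rcases le_or_gt t Kstar with h | h
  · refine le_trans (min_le_left _ _) ?_
    have : (t / Kstar) ^ rstar ≤ 1 :=
      Real.rpow_le_one (by positivity) ((div_le_one hKpos).mpr h) (by linarith)
    calc (1 : ℝ) = Real.exp 0 := Real.exp_zero.symm
    _ ≤ _ := Real.exp_le_exp.mpr (by linarith)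
  · refine le_trans (min_le_right _ _) ?_
    set u := t / Kstar with hu
    have hu1 : 1 ≤ u := le_of_lt ((one_lt_div hKpos).mpr h)
    have htc : t / c = u * (Kstar / c) := by
      field_simp [hu]
      rw [hu, div_mul_cancel₀ t hKpos.ne']
    have htcr : (t / c) ^ r = u ^ r * (1 + Real.log 2) := by
      rw [htc, Real.mul_rpow (by positivity) (by positivity), hKr]
    have h3 : u ^ rstar ≤ u ^ r := Real.rpow_le_rpow_of_exponent_le hu1 h2
    have h4 : 1 ≤ u ^ rstar := Real.one_le_rpow hu1 (by linarith)
    have key : Real.log 2 + (1 - (t / c) ^ r) ≤ 1 - u ^ rstar := by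
      rw [htcr]
      nlinarith [mul_le_mul_of_nonneg_right h3 hlog2]
    calc 2 * Real.exp (1 - (t / c) ^ r)
        = Real.exp (Real.log 2 + (1 - (t / c) ^ r)) := by
          rw [Real.exp_add, Real.exp_log (by norm_num)]
    _ ≤ _ := Real.exp_le_exp.mpr key
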